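/- Suppose h : ℝ² → ℝ is C¹ and x is a boundary point of two open sets A₁, A₂ partitioning a neighborhood V of x, separated by a C¹ curve through x with normal N. If -∇h(y)·N > 0 for all y ∈ A₂ ∩ V and -∇h(y)·N < 0 for all y ∈ A₁ ∩ V, then ∇h(x)·N = 0 and x is a local maximum of h restricted to the line {x + sN : |s| small}. -/

import Mathlib

open scoped RealInnerProductSpace

/-- If h : ℝ² → ℝ is C¹, x is a common boundary point of open sets A₁, A₂
filling a neighborhood V of x on either side of a separating curve through x
with normal N, and -∇h·N > 0 on A₂ ∩ V while -∇h·N < 0 on A₁ ∩ V, then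
∇h(x)·N = 0 and x is a local maximum of h restricted to the normal line
{x + sN : |s| small}. -/
theorem stmt10 (h : EuclideanSpace ℝ (Fin 2) → ℝ) (hh : ContDiff ℝ 1 h)
    (x N : EuclideanSpace ℝ (Fin 2)) (hN : ‖N‖ = 1)
    (V A₁ A₂ : Set (EuclideanSpace ℝ (Fin 2))) (hV : V ∈ nhds x)
    (hA₁ : IsOpen A₁) (hA₂ : IsOpen A₂)
    (hxcl : x ∈ closure A₁ ∧ x ∈ closure A₂)
    (hgrad₂ : ∀ y ∈ A₂ ∩ V, 0 < -⟪gradient h y, N⟫)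
    (hgrad₁ : ∀ y ∈ A₁ ∩ V, -⟪gradient h y, N⟫ < 0)
    (δ₀ : ℝ) (hδ₀ : 0 < δ₀)
    (hside : ∀ s : ℝ, 0 < s → s < δ₀ →
      x + s • N ∈ A₂ ∩ V ∧ x + (-s) • N ∈ A₁ ∩ V) :
    ⟪gradient h x, N⟫ = 0 ∧
    ∃ δ > 0, ∀ s : ℝ, |s| < δ → h (x + s • N) ≤ h x := by
  have hdiff : Differentiable ℝ h := hh.differentiable one_ne_zero
  have hgradeq : ∀ y, ⟪gradient h y, N⟫ = fderiv ℝ h y N := fun y =>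
    InnerProductSpace.toDual_symm_apply
  -- continuity of s ↦ ⟪∇h(x+sN), N⟫
  set c : ℝ → EuclideanSpace ℝ (Fin 2) := fun s => x + s • N with hc
  have hccont : Continuous c := by continuity
  set φ : ℝ → ℝ := fun s => ⟪gradient h (c s), N⟫ with hφ
  have hfc : Continuous (fun y => fderiv ℝ h y) := hh.continuous_fderiv one_ne_zero
  have hφcont : Continuous φ := by
    simp only [hφ, hgradeq]
    exact (ContinuousLinearMap.apply ℝ ℝ N).continuous.comp (hfc.comp hccont)
  have hφneg : ∀ s, 0 < s → s < δ₀ → φ s < 0 := fun s hs hs' => by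
    have h1 := hgrad₂ _ (hside s hs hs').1
    have h2 : 0 < -φ s := h1
    linarith
  have hφpos : ∀ s, -δ₀ < s → s < 0 → 0 < φ s := fun s hs hs' => by
    have h1 := hgrad₁ _ (hside (-s) (by linarith) (by linarith)).2
    rw [neg_neg] at h1
    have h2 : -φ s < 0 := h1
    linarith
  have hφ0 : φ 0 = 0 := by
    have h1 : φ 0 ≤ 0 := by
      have ht : Filter.Tendsto φ (nhdsWithin 0 (Set.Ioi 0)) (nhds (φ 0)) :=
        (hφcont.tendsto 0).mono_left nhdsWithin_le_nhds
      refine le_of_tendsto ht ?_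
      filter_upwards [Ioo_mem_nhdsGT_of_mem ⟨le_refl (0:ℝ), hδ₀⟩] with s hs
      exact (hφneg s hs.1 hs.2).le
    have h2 : 0 ≤ φ 0 := by
      have ht : Filter.Tendsto φ (nhdsWithin 0 (Set.Iio 0)) (nhds (φ 0)) :=
        (hφcont.tendsto 0).mono_left nhdsWithin_le_nhds
      refine ge_of_tendsto ht ?_
      filter_upwards [Ioo_mem_nhdsLT_of_mem ⟨neg_lt_zero.2 hδ₀, le_refl (0:ℝ)⟩] with s hs
      exact (hφpos s hs.1 hs.2).le
    linarith
  have hφ0' : ⟪gradient h x, N⟫ = 0 := by simpa [hφ, hc] using hφ0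
  refine ⟨hφ0', δ₀, hδ₀, fun s hs => ?_⟩
  -- g = h ∘ c
  have hgderiv : ∀ s : ℝ, HasDerivAt (fun t => h (c t)) (φ s) s := by
    intro s
    have h1 : HasDerivAt c N s := by
      simpa [hc] using ((hasDerivAt_id s).smul_const N).const_add x
    have h2 := (hdiff (c s)).hasFDerivAt.comp_hasDerivAt s h1
    simp only [hφ, hgradeq]; exact h2
  have hgc : Continuous (fun t => h (c t)) := (hh.continuous).comp hccont
  rcases lt_trichotomy s 0 with hs0 | hs0 | hs0
  · have hmono : StrictMonoOn (fun t => h (c t)) (Set.Icc (-δ₀) 0) := by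
      refine strictMonoOn_of_deriv_pos (convex_Icc _ _) (hgc.continuousOn) ?_
      intro t ht
      rw [interior_Icc] at ht
      rw [(hgderiv t).deriv]
      exact hφpos t ht.1 ht.2
    have : h (c s) < h (c 0) := by
      refine hmono ⟨?_, hs0.le⟩ ⟨(neg_lt_zero.2 hδ₀).le, le_refl 0⟩ hs0
      rw [abs_lt] at hs; linarith [hs.1]
    simpa [hc] using this.le
  · simp [hs0]
  · have hmono : StrictAntiOn (fun t => h (c t)) (Set.Icc 0 δ₀) := by
      refine strictAntiOn_of_deriv_neg (convex_Icc _ _) (hgc.continuousOn) ?_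
      intro t ht
      rw [interior_Icc] at ht
      rw [(hgderiv t).deriv]
      exact hφneg t ht.1 ht.2
    have : h (c s) < h (c 0) := by
      refine hmono ⟨le_refl 0, hδ₀.le⟩ ⟨hs0.le, ?_⟩ hs0
      rw [abs_lt] at hs; linarith [hs.2]
    simpa [hc] using this.le
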